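/- Let T ∈ ℝ^{m×n}, and let σ, η, r, s be real numbers with ‖T·x‖ ≤ σ·‖x‖ for all x ∈ ℝⁿ (i.e. σ is at least the largest singular value of T), 0 < η ≤ r, and s² ≥ (r² + η²)·(σ² + 1). Then the symmetric matrix s²·TᵀT − r²·(TᵀT)² + r²·I_n − η²·(TᵀT + I_n)² is positive semidefinite. -/

import Mathlib

lemma scalar_key (l σ η r s : ℝ) (h0 : 0 ≤ l) (h1 : l ≤ σ ^ 2) (hη : 0 < η) (hηr : η ≤ r)
    (hs : (r ^ 2 + η ^ 2) * (σ ^ 2 + 1) ≤ s ^ 2) :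
    0 ≤ s ^ 2 * l - r ^ 2 * l ^ 2 + r ^ 2 - η ^ 2 * (l + 1) ^ 2 := by
  have h4 : η ^ 2 ≤ r ^ 2 := pow_le_pow_left₀ hη.le hηr 2
  nlinarith [mul_le_mul_of_nonneg_right hs h0,
    mul_nonneg (mul_nonneg (by positivity : (0:ℝ) ≤ r ^ 2 + η ^ 2) h0) (sub_nonneg.2 h1),
    mul_nonneg (sub_nonneg.2 h4) h0]

theorem stmt_6 (m n : ℕ) (T : Matrix (Fin m) (Fin n) ℝ) (σ η r s : ℝ)
    (hT : ∀ x : Fin n → ℝ,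
      Real.sqrt (∑ i, (T.mulVec x i) ^ 2) ≤ σ * Real.sqrt (∑ i, (x i) ^ 2))
    (hη : 0 < η) (hηr : η ≤ r)
    (hs : s ^ 2 ≥ (r ^ 2 + η ^ 2) * (σ ^ 2 + 1)) :
    (s ^ 2 • (T.transpose * T) - r ^ 2 • (T.transpose * T) ^ 2
        + r ^ 2 • (1 : Matrix (Fin n) (Fin n) ℝ)
        - η ^ 2 • (T.transpose * T + 1) ^ 2).PosSemidef := by
  classical
  set A : Matrix (Fin n) (Fin n) ℝ := T.transpose * T with hAdef
  have hconj : T.conjTranspose = T.transpose := by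
    ext i j; simp [Matrix.conjTranspose_apply, Matrix.transpose_apply]
  have hPSD : A.PosSemidef := by
    rw [hAdef, ← hconj]; exact Matrix.posSemidef_conjTranspose_mul_self T
  have hA : A.IsHermitian := hPSD.isHermitian
  set lam : Fin n → ℝ := hA.eigenvalues with hlam
  set U : Matrix (Fin n) (Fin n) ℝ := (hA.eigenvectorUnitary : Matrix (Fin n) (Fin n) ℝ) with hUdef
  have hUU : U * star U = 1 := Matrix.mem_unitaryGroup_iff.mp hA.eigenvectorUnitary.2
  have hsU : star U * U = 1 := Matrix.mem_unitaryGroup_iff'.mp hA.eigenvectorUnitary.2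
  have hspec : A = U * Matrix.diagonal lam * star U := by
    have := hA.spectral_theorem
    simpa using this
  -- eigenvalue bounds
  have hlb : ∀ i, 0 ≤ lam i := fun i => hPSD.eigenvalues_nonneg i
  have hub : ∀ i, lam i ≤ σ ^ 2 := by
    intro i
    set v : Fin n → ℝ := ⇑(hA.eigenvectorBasis i) with hv
    have hmv : A.mulVec v = lam i • v := hA.mulVec_eigenvectorBasis i
    have hnorm1 : ∑ j, v j ^ 2 = 1 := by
      have h1 : ‖hA.eigenvectorBasis i‖ = 1 := hA.eigenvectorBasis.orthonormal.1 i
      have h2 : (inner ℝ (hA.eigenvectorBasis i) (hA.eigenvectorBasis i) : ℝ) = 1 := by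
        rw [real_inner_self_eq_norm_mul_norm, h1]; ring
      rw [PiLp.inner_apply] at h2
      simpa [RCLike.inner_apply, pow_two, hv] using h2
    have hq : lam i = ∑ j, (T.mulVec v j) ^ 2 := by
      have h3 : dotProduct v (A.mulVec v) = lam i := by
        rw [hmv, dotProduct_smul]
        simp only [smul_eq_mul]
        rw [show dotProduct v v = ∑ j, v j ^ 2 by
          simp [dotProduct, pow_two], hnorm1, mul_one]
      have h4 : dotProduct v (A.mulVec v)
          = dotProduct (T.mulVec v) (T.mulVec v) := by
        rw [hAdef, ← Matrix.mulVec_mulVec, Matrix.dotProduct_mulVec, Matrix.vecMul_transpose]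
      rw [← h3, h4]
      simp [dotProduct, pow_two]
    have hTv := hT v
    rw [hnorm1, Real.sqrt_one, mul_one] at hTv
    have ha : 0 ≤ ∑ j, (T.mulVec v j) ^ 2 := by positivity
    calc lam i = Real.sqrt (∑ j, (T.mulVec v j) ^ 2) ^ 2 := by rw [Real.sq_sqrt ha, hq]
      _ ≤ σ ^ 2 := pow_le_pow_left₀ (Real.sqrt_nonneg _) hTv 2
  -- the polynomial applied to eigenvalues
  set f : Fin n → ℝ := fun i => s ^ 2 * lam i - r ^ 2 * (lam i) ^ 2 + r ^ 2 - η ^ 2 * (lam i + 1) ^ 2 with hf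
  have hfnn : ∀ i, 0 ≤ f i := fun i =>
    scalar_key (lam i) σ η r s (hlb i) (hub i) hη hηr hs
  -- conjugation helpers
  have hmul : ∀ X Y : Matrix (Fin n) (Fin n) ℝ,
      (U * X * star U) * (U * Y * star U) = U * (X * Y) * star U := by
    intro X Y
    calc (U * X * star U) * (U * Y * star U)
        = U * X * (star U * U) * Y * star U := by
          simp only [Matrix.mul_assoc]
      _ = U * (X * Y) * star U := by rw [hsU, Matrix.mul_one]; simp only [Matrix.mul_assoc]
  have hone : (1 : Matrix (Fin n) (Fin n) ℝ) = U * 1 * star U := by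
    rw [Matrix.mul_one, hUU]
  have key : s ^ 2 • A - r ^ 2 • A ^ 2 + r ^ 2 • (1 : Matrix (Fin n) (Fin n) ℝ)
      - η ^ 2 • (A + 1) ^ 2 = U * Matrix.diagonal f * star U := by
    rw [hspec, hone, pow_two (U * Matrix.diagonal lam * star U), hmul]
    rw [show U * Matrix.diagonal lam * star U + U * 1 * star U
        = U * (Matrix.diagonal lam + 1) * star U by
      rw [Matrix.mul_add, Matrix.add_mul]]
    rw [pow_two (U * (Matrix.diagonal lam + 1) * star U), hmul]
    have hsmul : ∀ (c : ℝ) (X : Matrix (Fin n) (Fin n) ℝ),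
        c • (U * X * star U) = U * (c • X) * star U := fun c X => by
      rw [Matrix.mul_smul, Matrix.smul_mul]
    have hadd : ∀ X Y : Matrix (Fin n) (Fin n) ℝ,
        (U * X * star U) + (U * Y * star U) = U * (X + Y) * star U := fun X Y => by
      rw [Matrix.mul_add, Matrix.add_mul]
    have hsub : ∀ X Y : Matrix (Fin n) (Fin n) ℝ,
        (U * X * star U) - (U * Y * star U) = U * (X - Y) * star U := fun X Y => by
      rw [Matrix.mul_sub, Matrix.sub_mul]
    rw [hsmul, hsmul, hsmul, hsmul, hsub, hadd, hsub]
    congr 2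
    rw [show (1 : Matrix (Fin n) (Fin n) ℝ) = Matrix.diagonal (fun _ => 1) from
      Matrix.diagonal_one.symm]
    simp only [Matrix.diagonal_mul_diagonal, ← Matrix.diagonal_smul, Matrix.diagonal_add,
      Matrix.diagonal_sub, ← Matrix.diagonal_sub]
    simp only [← Matrix.diagonal_smul, Matrix.diagonal_add, Matrix.diagonal_mul_diagonal,
      Matrix.diagonal_sub]
    exact congrArg Matrix.diagonal (funext fun i => by
      simp only [hf, Pi.add_apply, Pi.sub_apply, Pi.smul_apply, smul_eq_mul]
      ring)
  rw [hAdef] at key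
  rw [key]
  exact (Matrix.posSemidef_diagonal_iff.mpr hfnn).mul_mul_conjTranspose_same U
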